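/- Let S be an m-dimensional vector space of C^{m-1} functions on [a,b] containing the constants, and suppose that DS = {F' : F ∈ S} is an (m-1)-dimensional space in which every nonzero element has at most m-2 zeros in [a,b] counted with multiplicity. Let f_ℓ ∈ S (ℓ = 2,...,m) satisfy D^r f_ℓ(a) = 0 for r = 0,...,ℓ-2 and f_ℓ(b) = 1, D^r f_ℓ(b) = 0 for r = 1,...,m-ℓ. Then each f_ℓ is strictly increasing on [a,b], and f_ℓ' > 0 on (a,b). -/

import Mathlib

def VanishesTo (F : ℝ → ℝ) (x : ℝ) (μ : ℕ) : Prop :=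
  ∀ r < μ, iteratedDeriv r F x = 0

def AtMostZeros (m : ℕ) (I : Set ℝ) (F : ℝ → ℝ) : Prop :=
  ∀ (h : ℕ) (τ : Fin h → ℝ) (μ : Fin h → ℕ),
    Function.Injective τ → (∀ j, τ j ∈ I) → (∀ j, 1 ≤ μ j ∧ μ j ≤ m) →
    (∑ j, μ j) = m → ¬ (∀ j, VanishesTo F (τ j) (μ j))

lemma helper_no_zero (M : ℕ) (g : ℝ → ℝ) (a x b : ℝ)
    (hax : a < x) (hxb : x < b)
    (A : AtMostZeros M (Set.Icc a b) g)
    (p q : ℕ) (hpq : p + 1 + q = M)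
    (hva : VanishesTo g a p) (hx0 : g x = 0) (hvb : VanishesTo g b q) : False := by
  have hxab : x ∈ Set.Icc a b := ⟨le_of_lt hax, le_of_lt hxb⟩
  have haab : a ∈ Set.Icc a b := ⟨le_refl a, by linarith⟩
  have hbab : b ∈ Set.Icc a b := ⟨by linarith, le_refl b⟩
  have hvx : VanishesTo g x 1 := by
    intro r hr
    interval_cases r
    simpa using hx0
  rcases Nat.eq_zero_or_pos p with hp | hp <;> rcases Nat.eq_zero_or_pos q with hq | hq
  · refine A 1 ![x] ![1] (Function.injective_of_subsingleton _) ?_ ?_ ?_ ?_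
    · intro j; fin_cases j; simpa using hxab
    · intro j; fin_cases j; constructor <;> simp <;> omega
    · simp [Fin.sum_univ_one]; omega
    · intro j; fin_cases j; simpa using hvx
  · refine A 2 ![x, b] ![1, q] ?_ ?_ ?_ ?_ ?_
    · intro i j hij
      fin_cases i <;> fin_cases j <;> simp_all <;> linarith
    · intro j; fin_cases j <;> simp [hxab, hbab]
    · intro j; fin_cases j <;> constructor <;> simp <;> omega
    · simp [Fin.sum_univ_two]; omega
    · intro j; fin_cases j
      · simpa using hvx
      · simpa using hvb
  · refine A 2 ![a, x] ![p, 1] ?_ ?_ ?_ ?_ ?_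
    · intro i j hij
      fin_cases i <;> fin_cases j <;> simp_all <;> linarith
    · intro j; fin_cases j <;> simp [hxab, haab]
    · intro j; fin_cases j <;> constructor <;> simp <;> omega
    · simp [Fin.sum_univ_two]; omega
    · intro j; fin_cases j
      · simpa using hva
      · simpa using hvx
  · refine A 3 ![a, x, b] ![p, 1, q] ?_ ?_ ?_ ?_ ?_
    · intro i j hij
      fin_cases i <;> fin_cases j <;> simp_all <;> linarith
    · intro j; fin_cases j <;> simp [hxab, haab, hbab]
    · intro j; fin_cases j <;> constructor <;> simp <;> omega
    · simp [Fin.sum_univ_three]; omega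
    · intro j; fin_cases j
      · simpa using hva
      · simpa using hvx
      · simpa using hvb

theorem stmt_7 (m : ℕ) (hm : 2 ≤ m) (a b : ℝ) (hab : a < b)
    (S : Submodule ℝ (ℝ → ℝ))
    (hdim : Module.finrank ℝ S = m)
    (hsm : ∀ F ∈ S, ContDiff ℝ (m - 1 : ℕ) F)
    (h1 : (fun _ => (1 : ℝ)) ∈ S)
    (hDSdim : Module.finrank ℝ ↥(Submodule.span ℝ (deriv '' (S : Set (ℝ → ℝ)))) = m - 1)
    (hDSEC : ∀ F ∈ S, (∃ x ∈ Set.Icc a b, deriv F x ≠ 0) →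
      AtMostZeros (m - 1) (Set.Icc a b) (deriv F))
    (f : ℕ → ℝ → ℝ)
    (hfS : ∀ ℓ, 2 ≤ ℓ → ℓ ≤ m → f ℓ ∈ S)
    (ha0 : ∀ ℓ, 2 ≤ ℓ → ℓ ≤ m → ∀ r ≤ ℓ - 2, iteratedDeriv r (f ℓ) a = 0)
    (hb1 : ∀ ℓ, 2 ≤ ℓ → ℓ ≤ m → f ℓ b = 1)
    (hb0 : ∀ ℓ, 2 ≤ ℓ → ℓ ≤ m → ∀ r, 1 ≤ r → r ≤ m - ℓ → iteratedDeriv r (f ℓ) b = 0) :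
    ∀ ℓ, 2 ≤ ℓ → ℓ ≤ m →
      StrictMonoOn (f ℓ) (Set.Icc a b) ∧ ∀ x ∈ Set.Ioo a b, 0 < deriv (f ℓ) x := by
  intro ℓ hℓ2 hℓm
  set F := f ℓ with hF
  have hFS : F ∈ S := hfS ℓ hℓ2 hℓm
  have hdiff : ContDiff ℝ (m - 1 : ℕ) F := hsm F hFS
  have h1n : (1 : WithTop ℕ∞) ≤ ((m - 1 : ℕ) : ℕ∞) := by
    exact_mod_cast Nat.one_le_cast.mpr (show 1 ≤ m - 1 by omega)
  have hFdiff : Differentiable ℝ F := hdiff.differentiable (by exact_mod_cast (show m - 1 ≠ 0 by omega))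
  have hgcont : Continuous (deriv F) := hdiff.continuous_deriv h1n
  have hFa : F a = 0 := by
    have := ha0 ℓ hℓ2 hℓm 0 (Nat.zero_le _)
    simpa using this
  have hFb : F b = 1 := hb1 ℓ hℓ2 hℓm
  -- mean value: some point with positive derivative
  obtain ⟨c, hc, hc'⟩ := exists_hasDerivAt_eq_slope F (deriv F) hab
    (hFdiff.continuous.continuousOn)
    (fun x _ => (hFdiff x).hasDerivAt)
  have hcpos : 0 < deriv F c := by
    rw [hc', hFa, hFb]
    apply div_pos (by norm_num) (by linarith)
  have A : AtMostZeros (m - 1) (Set.Icc a b) (deriv F) :=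
    hDSEC F hFS ⟨c, ⟨le_of_lt hc.1, le_of_lt hc.2⟩, ne_of_gt hcpos⟩
  -- vanishing at a and b
  have hva : VanishesTo (deriv F) a (ℓ - 2) := by
    intro r hr
    rw [← iteratedDeriv_succ']
    exact ha0 ℓ hℓ2 hℓm (r + 1) (by omega)
  have hvb : VanishesTo (deriv F) b (m - ℓ) := by
    intro r hr
    rw [← iteratedDeriv_succ']
    exact hb0 ℓ hℓ2 hℓm (r + 1) (by omega) (by omega)
  -- no zero of deriv F in the open interval
  have hne : ∀ x ∈ Set.Ioo a b, deriv F x ≠ 0 := by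
    intro x hx h0
    exact helper_no_zero (m - 1) (deriv F) a x b hx.1 hx.2 A (ℓ - 2) (m - ℓ)
      (by omega) hva h0 hvb
  -- positivity of deriv F on the open interval
  have hpos : ∀ x ∈ Set.Ioo a b, 0 < deriv F x := by
    intro x hx
    rcases lt_trichotomy (deriv F x) 0 with hlt | heq | hgt
    · exfalso
      have hsub : Set.uIcc x c ⊆ Set.Ioo a b :=
        (Set.ordConnected_Ioo).uIcc_subset hx hc
      have h0mem : (0 : ℝ) ∈ Set.uIcc (deriv F x) (deriv F c) :=
        Set.mem_uIcc.mpr (Or.inl ⟨le_of_lt hlt, le_of_lt hcpos⟩)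
      obtain ⟨y, hy, hy0⟩ := intermediate_value_uIcc (hgcont.continuousOn) h0mem
      exact hne y (hsub hy) hy0
    · exact absurd heq (hne x hx)
    · exact hgt
  refine ⟨?_, hpos⟩
  apply strictMonoOn_of_deriv_pos (convex_Icc a b) (hFdiff.continuous.continuousOn)
  intro x hx
  rw [interior_Icc] at hx
  exact hpos x hx
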